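/- Let P ∈ ℂ[x_1,...,x_n] be a polynomial, p a prime dividing n, ω = e^{2πi/p}, B_s = {x ∈ {1,ω,...,ω^{p-1}}^n : x_1⋯x_n = ω^s}. If P vanishes on B_s for some s and P(q) ≠ 0 for some q in B \ B_s, then deg(P) ≥ n(p-1)/p. -/

import Mathlib

open MvPolynomial

open Finset


section chars
variable {p : ℕ} [NeZero p] {ω : ℂ}

lemma pow_mod_eq (hωp : ω ^ p = 1) (m : ℕ) : ω ^ (m % p) = ω ^ m := by
  conv_rhs => rw [← Nat.mod_add_div m p, pow_add, pow_mul, hωp, one_pow, mul_one]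

lemma e_add (hωp : ω ^ p = 1) (a b : ZMod p) :
    ω ^ (a + b).val = ω ^ a.val * ω ^ b.val := by
  rw [ZMod.val_add, pow_mod_eq hωp, pow_add]

lemma sum_val_eq : ∑ j : ZMod p, ω ^ j.val = ∑ i ∈ range p, ω ^ i := by
  refine Finset.sum_nbij' (fun j => j.val) (fun i => (i : ZMod p)) ?_ ?_ ?_ ?_ ?_
  · intro a _; exact mem_range.mpr (ZMod.val_lt a)
  · intro a _; exact mem_univ _
  · intro a _; simp [ZMod.natCast_val]
  · intro a ha; exact ZMod.val_natCast_of_lt (mem_range.mp ha)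
  · intro a _; rfl

lemma char_sum (hp : p.Prime) (hω : IsPrimitiveRoot ω p) (c : ZMod p) :
    ∑ j : ZMod p, ω ^ (c * j).val = if c = 0 then (p : ℂ) else 0 := by
  haveI := Fact.mk hp
  split_ifs with hc
  · subst hc; simp [ZMod.val_zero]
  · have hbij : Function.Bijective (fun j : ZMod p => c * j) :=
      (mulLeft_bijective₀ c hc)
    rw [Fintype.sum_bijective _ hbij (fun j => ω ^ (c*j).val) (fun j => ω ^ j.val) (fun _ => rfl)]
    rw [sum_val_eq, geom_sum_eq (hω.ne_one hp.one_lt), hω.pow_eq_one, sub_self, zero_div]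

end chars

open MvPolynomial

noncomputable def fhat (p : ℕ) {n : ℕ} (P : MvPolynomial (Fin n) ℂ) (α : Fin n → ZMod p) : ℂ :=
  ∑ β ∈ P.support.filter (fun β => (fun i => ((β i : ZMod p))) = α), coeff β P

section red
variable {p n : ℕ} [NeZero p] {ω : ℂ} (hωp : ω ^ p = 1)

lemma evalA (P : MvPolynomial (Fin n) ℂ) (x : Fin n → ℂ) (hx : ∀ i, x i ^ p = 1) :
    eval x P = ∑ α : Fin n → ZMod p, fhat p P α * ∏ i, x i ^ (α i).val := by
  rw [eval_eq']
  rw [← Finset.sum_fiberwise P.support (fun β => (fun i => ((β i : ZMod p)))) 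
      (fun β => coeff β P * ∏ i, x i ^ β i)]
  refine Finset.sum_congr rfl fun α _ => ?_
  rw [fhat, Finset.sum_mul]
  refine Finset.sum_congr rfl fun β hβ => ?_
  have hβ' := (Finset.mem_filter.mp hβ).2
  congr 1
  refine Finset.prod_congr rfl fun i _ => ?_
  have : (α i).val = β i % p := by rw [← hβ']; exact ZMod.val_natCast _ _
  rw [this, pow_mod_eq (hx i)]

lemma degB {P : MvPolynomial (Fin n) ℂ} {α : Fin n → ZMod p} (h : fhat p P α ≠ 0) :
    ∑ i, (α i).val ≤ P.totalDegree := by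
  obtain ⟨β, hβ, hc⟩ := Finset.exists_ne_zero_of_sum_ne_zero h
  obtain ⟨hβs, hβ'⟩ := Finset.mem_filter.mp hβ
  calc ∑ i, (α i).val ≤ ∑ i, β i := by
        refine Finset.sum_le_sum fun i _ => ?_
        rw [← hβ', ZMod.val_natCast]; exact Nat.mod_le _ _
    _ ≤ P.totalDegree := by
        have := MvPolynomial.le_totalDegree hβs
        rwa [Finsupp.sum_fintype _ _ (fun _ => rfl)] at this

end red

section more
variable {p : ℕ} [NeZero p] {ω : ℂ}

lemma e_mul (hωp : ω ^ p = 1) (a b : ZMod p) : ω ^ (a * b).val = (ω ^ a.val) ^ b.val := by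
  rw [← pow_mul, ZMod.val_mul, pow_mod_eq hωp]

lemma e_prod (hωp : ω ^ p = 1) {ι : Type*} (t : Finset ι) (a : ι → ZMod p) :
    ω ^ (∑ i ∈ t, a i).val = ∏ i ∈ t, ω ^ (a i).val := by
  induction t using Finset.cons_induction with
  | empty => simp
  | cons i t hi ih => rw [Finset.sum_cons, Finset.prod_cons, e_add hωp, ih]

end more

section coset
open MvPolynomial

lemma coset_sum {p n : ℕ} [NeZero p] (hp : p.Prime) {ω : ℂ} (hω : IsPrimitiveRoot ω p)
    (P : MvPolynomial (Fin n) ℂ) (s : ℕ)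
    (hvanish : ∀ x : Fin n → ℂ, (∀ i, x i ^ p = 1) → ∏ i, x i = ω ^ s → eval x P = 0)
    (β : Fin n → ZMod p) :
    ∑ m : ZMod p, ω ^ (-(m * (s : ZMod p))).val * fhat p P (fun i => β i - m) = 0 := by
  have hωp : ω ^ p = 1 := hω.pow_eq_one
  set s' : ZMod p := (s : ZMod p) with hs'
  set T : (Fin n → ZMod p) → ZMod p → ℂ := fun y m =>
    (eval (fun i => ω ^ (y i).val) P * ∏ i, ω ^ ((-(β i)) * (y i)).val) *
      ω ^ ((m * (∑ i, y i - s')).val) with hT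
  have hS0 : ∑ y : Fin n → ZMod p, ∑ m : ZMod p, T y m = 0 := by
    apply Finset.sum_eq_zero; intro y _
    by_cases hy : ∑ i, y i = s'
    · have h1 : eval (fun i => ω ^ (y i).val) P = 0 := by
        apply hvanish
        · intro i; rw [← pow_mul, mul_comm, pow_mul, hωp, one_pow]
        · rw [← e_prod hωp, hy, hs', ZMod.val_natCast, pow_mod_eq hωp]
      apply Finset.sum_eq_zero; intro m _
      simp only [hT, h1, zero_mul]
    · have h2 : ∑ m : ZMod p, ω ^ ((m * (∑ i, y i - s')).val) = 0 := by
        have hcs := char_sum hp hω (∑ i, y i - s')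
        rw [if_neg (sub_ne_zero.mpr hy)] at hcs
        rw [← hcs]
        exact Finset.sum_congr rfl fun m _ => by rw [mul_comm]
      simp only [hT]
      rw [← Finset.mul_sum, h2, mul_zero]
  have key : ∀ (y : Fin n → ZMod p) (m : ZMod p), T y m =
      ∑ α : Fin n → ZMod p,
        (fhat p P α * ω ^ ((-(m * s')).val)) * ∏ i, ω ^ (((α i - β i + m) * (y i)).val) := by
    intro y m
    simp only [hT]
    rw [evalA P _ (fun i => by rw [← pow_mul, mul_comm, pow_mul, hωp, one_pow])]
    rw [Finset.sum_mul, Finset.sum_mul]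
    refine Finset.sum_congr rfl fun α _ => ?_
    have hsplit : ω ^ ((m * (∑ i, y i - s')).val)
        = ω ^ ((-(m * s')).val) * ∏ i, ω ^ ((m * y i).val) := by
      have h3 : m * (∑ i, y i - s') = (∑ i, m * y i) + (-(m * s')) := by
        rw [← Finset.mul_sum]; ring
      rw [h3, e_add hωp, e_prod hωp, mul_comm]
    have hprod : ∏ i, ω ^ (((α i - β i + m) * (y i)).val)
        = (∏ i, (ω ^ ((y i).val)) ^ ((α i).val)) * ((∏ i, ω ^ ((-(β i)) * (y i)).val)
            * ∏ i, ω ^ ((m * y i).val)) := by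
      rw [← Finset.prod_mul_distrib, ← Finset.prod_mul_distrib]
      refine Finset.prod_congr rfl fun i _ => ?_
      have harith : (α i - β i + m) * (y i) = α i * y i + ((-(β i)) * y i + m * y i) := by ring
      rw [harith, e_add hωp, e_add hωp]
      congr 1
      rw [mul_comm (α i) (y i), e_mul hωp]
    rw [hsplit, hprod]
    ring
  have hcollapse : ∀ m : ZMod p,
      ∑ y : Fin n → ZMod p, ∑ α : Fin n → ZMod p,
        (fhat p P α * ω ^ ((-(m * s')).val)) * ∏ i, ω ^ (((α i - β i + m) * (y i)).val)
      = (p : ℂ) ^ n * (ω ^ ((-(m * s')).val) * fhat p P (fun i => β i - m)) := by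
    intro m
    rw [Finset.sum_comm]
    have hinner : ∀ α : Fin n → ZMod p,
        ∑ y : Fin n → ZMod p, ∏ i, ω ^ (((α i - β i + m) * (y i)).val)
        = if α = (fun i => β i - m) then (p:ℂ)^n else 0 := by
      intro α
      have h4 : ∑ y : Fin n → ZMod p, ∏ i, ω ^ (((α i - β i + m) * (y i)).val)
          = ∏ i, ∑ j : ZMod p, ω ^ (((α i - β i + m) * j).val) := by
        rw [Finset.prod_univ_sum, Fintype.piFinset_univ]
      rw [h4]
      by_cases hα : α = fun i => β i - m
      · have h5 : ∀ i, α i - β i + m = 0 := by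
          intro i; rw [congrFun hα i]; ring
        rw [if_pos hα]
        calc ∏ i : Fin n, ∑ j : ZMod p, ω ^ (((α i - β i + m) * j).val)
            = ∏ _i : Fin n, (p : ℂ) := by
              refine Finset.prod_congr rfl fun i _ => ?_
              rw [char_sum hp hω, if_pos (h5 i)]
          _ = (p:ℂ)^n := by rw [Finset.prod_const, Finset.card_univ, Fintype.card_fin]
      · rw [if_neg hα]
        have h6 : ∃ i, α i - β i + m ≠ 0 := by
          by_contra hall
          push_neg at hall
          apply hα; funext i
          linear_combination hall i
        obtain ⟨i, hi⟩ := h6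
        apply Finset.prod_eq_zero (Finset.mem_univ i)
        rw [char_sum hp hω, if_neg hi]
    calc ∑ α : Fin n → ZMod p, ∑ y : Fin n → ZMod p,
          (fhat p P α * ω ^ ((-(m * s')).val)) * ∏ i, ω ^ (((α i - β i + m) * (y i)).val)
        = ∑ α : Fin n → ZMod p, (fhat p P α * ω ^ ((-(m * s')).val)) *
            (if α = (fun i => β i - m) then (p:ℂ)^n else 0) := by
          refine Finset.sum_congr rfl fun α _ => ?_
          rw [← Finset.mul_sum, hinner α]
      _ = (p : ℂ) ^ n * (ω ^ ((-(m * s')).val) * fhat p P (fun i => β i - m)) := by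
          simp only [mul_ite, mul_zero]
          rw [Finset.sum_ite_eq' Finset.univ ((fun i => β i - m) : Fin n → ZMod p)
            (fun α => fhat p P α * ω ^ ((-(m * s')).val) * (p:ℂ)^n)]
          rw [if_pos (Finset.mem_univ _)]
          ring
  have hfinal : (p : ℂ) ^ n *
      (∑ m : ZMod p, ω ^ ((-(m * s')).val) * fhat p P (fun i => β i - m)) = 0 := by
    rw [Finset.mul_sum, ← hS0, Finset.sum_comm]
    refine Finset.sum_congr rfl fun m _ => ?_
    rw [← hcollapse m]
    exact Finset.sum_congr rfl fun y _ => (key y m).symm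
  have hpn : ((p : ℂ))^n ≠ 0 := pow_ne_zero _ (Nat.cast_ne_zero.mpr hp.pos.ne')
  exact (mul_eq_zero.mp hfinal).resolve_left hpn
end coset

lemma intarith (p n d c A B : ℤ) (hp : 0 < p) (hd1 : 1 ≤ d) (hd2 : d ≤ p - 1)
    (hn : 0 ≤ n) (h1 : B = A + n*d - p*c) (h2 : c*(p-d) ≤ A)
    (h3 : p*A < n*(p-1)) (h4 : p*B < n*(p-1)) : False := by
  have hp0 : (0:ℤ) ≤ p := hp.le
  have i1 : n*(p*d - p + 1) < p*c*d := by nlinarith [mul_le_mul_of_nonneg_left h2 hp0]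
  have i2 : p*c*(p-d) < n*(p-1) := by nlinarith [mul_le_mul_of_nonneg_left h2 hp0]
  have hpd : (0:ℤ) < p - d := by linarith
  have hd0 : (0:ℤ) < d := by linarith
  have j1 := mul_lt_mul_of_pos_right i1 hpd
  have j2 := mul_lt_mul_of_pos_right i2 hd0
  nlinarith [mul_nonneg (mul_nonneg (mul_nonneg hn hp0) (by linarith : (0:ℤ) ≤ d - 1))
    (by linarith : (0:ℤ) ≤ p - d - 1), j1, j2]

lemma comb {p n : ℕ} [NeZero p] (hp1 : 1 < p) (α : Fin n → ZMod p) (k : ZMod p) (hk : k ≠ 0)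
    {D : ℕ} (hA : ∑ i, (α i).val ≤ D) (hB : ∑ i, (α i + k).val ≤ D)
    (hD : p * D < n * (p - 1)) : False := by
  set d := k.val with hd
  have hd1 : 1 ≤ d := Nat.pos_of_ne_zero (fun h => hk ((ZMod.val_eq_zero k).mp h))
  have hdlt : d < p := ZMod.val_lt k
  set c := (Finset.univ.filter (fun i : Fin n => p ≤ (α i).val + d)).card with hc
  set A := ∑ i, (α i).val with hA'
  set B := ∑ i, (α i + k).val with hB'
  -- per-coordinate value of (α i + k).val in ℤ
  have hcoord : ∀ i, (((α i + k).val : ℤ)) =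
      ((α i).val : ℤ) + d - (if p ≤ (α i).val + d then (p:ℤ) else 0) := by
    intro i
    clear hD hA hB
    rw [ZMod.val_add]
    have hlt : (α i).val + d < 2 * p := by have := ZMod.val_lt (α i); omega
    by_cases h : p ≤ (α i).val + d
    · rw [if_pos h]
      have hv := ZMod.val_lt (α i)
      have : ((α i).val + d) % p = (α i).val + d - p := by
        rw [Nat.mod_eq_sub_mod h]
        exact Nat.mod_eq_of_lt (by omega)
      rw [this]; push_cast [Nat.cast_sub h]; ring
    · rw [if_neg h]
      have : ((α i).val + d) % p = (α i).val + d := Nat.mod_eq_of_lt (by omega)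
      rw [this]; push_cast; ring
  have hF2 : (B : ℤ) = (A : ℤ) + n * d - p * c := by
    rw [hB', Nat.cast_sum]
    rw [Finset.sum_congr rfl (fun i _ => hcoord i)]
    rw [Finset.sum_sub_distrib, Finset.sum_add_distrib]
    have h1 : ∑ _i : Fin n, (d:ℤ) = n * d := by
      rw [Finset.sum_const, Finset.card_univ, Fintype.card_fin, nsmul_eq_mul]
    have h2 : ∑ i : Fin n, (if p ≤ (α i).val + d then (p:ℤ) else 0) = c * p := by
      rw [← Finset.sum_filter, Finset.sum_const, nsmul_eq_mul, hc]
    rw [h1, h2, hA', Nat.cast_sum]; ring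
  have hF3 : (c : ℤ) * ((p:ℤ) - d) ≤ A := by
    have hnat : c * (p - d) ≤ A := by
      calc c * (p - d) = ∑ _i ∈ Finset.univ.filter (fun i : Fin n => p ≤ (α i).val + d), (p - d) := by
            rw [Finset.sum_const, smul_eq_mul, hc]
        _ ≤ ∑ i ∈ Finset.univ.filter (fun i : Fin n => p ≤ (α i).val + d), (α i).val := by
            refine Finset.sum_le_sum fun i hi => ?_
            have := (Finset.mem_filter.mp hi).2
            omega
        _ ≤ A := Finset.sum_le_sum_of_subset (Finset.filter_subset _ _)
    calc (c : ℤ) * ((p:ℤ) - d) = ((c * (p - d) : ℕ) : ℤ) := by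
          push_cast [Nat.cast_sub hdlt.le]; ring
      _ ≤ A := by exact_mod_cast hnat
  have hcast : ((n * (p - 1) : ℕ) : ℤ) = (n:ℤ) * ((p:ℤ) - 1) := by
    push_cast [Nat.cast_sub hp1.le]; ring
  have h3n : p * A < n * (p - 1) := lt_of_le_of_lt (Nat.mul_le_mul_left _ hA) hD
  have h4n : p * B < n * (p - 1) := lt_of_le_of_lt (Nat.mul_le_mul_left _ hB) hD
  refine intarith p n d c A B ?_ ?_ ?_ ?_ hF2 hF3 ?_ ?_
  · exact_mod_cast Nat.zero_lt_of_lt hp1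
  · exact_mod_cast hd1
  · omega
  · exact Int.ofNat_nonneg n
  · calc (p:ℤ) * A = ((p * A : ℕ) : ℤ) := by push_cast; ring
      _ < ((n * (p-1) : ℕ) : ℤ) := by exact_mod_cast h3n
      _ = (n:ℤ) * ((p:ℤ) - 1) := hcast
  · calc (p:ℤ) * B = ((p * B : ℕ) : ℤ) := by push_cast; ring
      _ < ((n * (p-1) : ℕ) : ℤ) := by exact_mod_cast h4n
      _ = (n:ℤ) * ((p:ℤ) - 1) := hcast


/-- If a polynomial `P` vanishes on `B_s` (the vectors of `p`-th roots of unity whose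
coordinates multiply to `ω^s`) but is nonzero at some point `q ∈ B \ B_s`, then
`deg P ≥ n(p-1)/p`. -/
theorem stmt16 (p n s : ℕ) (hp : p.Prime) (hpn : p ∣ n) (hn : 0 < n) (hs : s ≤ p - 1)
    (P : MvPolynomial (Fin n) ℂ)
    (hvanish : ∀ x : Fin n → ℂ, (∀ i, x i ^ p = 1) →
      ∏ i, x i = Complex.exp (2 * Real.pi * Complex.I / p) ^ s → eval x P = 0)
    (q : Fin n → ℂ) (hq : ∀ i, q i ^ p = 1)
    (hq' : ∏ i, q i ≠ Complex.exp (2 * Real.pi * Complex.I / p) ^ s)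
    (hPq : eval q P ≠ 0) :
    n * (p - 1) ≤ p * P.totalDegree := by
  haveI : NeZero p := ⟨hp.pos.ne'⟩
  set ω : ℂ := Complex.exp (2 * Real.pi * Complex.I / p) with hωdef
  have hω : IsPrimitiveRoot ω p := Complex.isPrimitiveRoot_exp p hp.pos.ne'
  have hex : ∃ α : Fin n → ZMod p, fhat p P α ≠ 0 := by
    by_contra hall
    push_neg at hall
    apply hPq
    rw [evalA P q hq]
    exact Finset.sum_eq_zero fun α _ => by rw [hall α, zero_mul]
  obtain ⟨α, h0⟩ := hex
  have hsum := coset_sum hp hω P s hvanish α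
  have hex2 : ∃ m : ZMod p, m ≠ 0 ∧ fhat p P (fun i => α i - m) ≠ 0 := by
    by_contra hall
    push_neg at hall
    apply h0
    have hterm : ∑ m : ZMod p, ω ^ (-(m * (s:ZMod p))).val * fhat p P (fun i => α i - m)
        = ω ^ ((-((0:ZMod p) * (s:ZMod p))).val) * fhat p P (fun i => α i - 0) := by
      apply Finset.sum_eq_single_of_mem 0 (Finset.mem_univ _)
      intro m _ hm
      rw [hall m hm, mul_zero]
    rw [hsum] at hterm
    simp only [zero_mul, neg_zero, ZMod.val_zero, pow_zero, one_mul, sub_zero] at hterm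
    exact hterm.symm
  obtain ⟨m, hm, h1⟩ := hex2
  have hA := degB (p := p) h0
  have hB : ∑ i, (α i + (-m)).val ≤ P.totalDegree := by
    have := degB (p := p) h1
    simpa [sub_eq_add_neg] using this
  by_contra hcon
  push_neg at hcon
  exact comb hp.one_lt α (-m) (neg_ne_zero.mpr hm) hA hB hcon
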